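/- Let N and O be finite nonempty sets, d ≥ 1 an integer, and for each j ∈ O let m_j and c_j be integers with 0 ≤ m_j and c_j ≥ 1. Then every extreme point of the polytope R = {μ ∈ [0,1]^{N×O} : ∑_{j∈O} μ_{ij} = d for every i ∈ N, and m_j ≤ ∑_{i∈N} μ_{ij} ≤ c_j for every j ∈ O} has all of its entries in {0,1}. -/

import Mathlib

open Finset

lemma exists_ne_zero_mulVec_eq_zero {ι κ : Type*} [Fintype ι] [Fintype κ]
    (h : Fintype.card κ < Fintype.card ι) (A : Matrix κ ι ℝ) :
    ∃ v : ι → ℝ, v ≠ 0 ∧ A.mulVec v = 0 := by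
  have hker : LinearMap.ker A.mulVecLin ≠ ⊥ := by
    intro hk
    have hinj : Function.Injective A.mulVecLin := LinearMap.ker_eq_bot.mp hk
    have := LinearMap.finrank_le_finrank_of_injective hinj
    simp [Module.finrank_pi] at this
    omega
  obtain ⟨v, hv, hv0⟩ := (Submodule.ne_bot_iff _).mp hker
  exact ⟨v, hv0, hv⟩

lemma sum_zero_one_int {κ : Type*} (s : Finset κ) (f : κ → ℝ)
    (h : ∀ x ∈ s, f x = 0 ∨ f x = 1) : ∃ z : ℤ, ∑ x ∈ s, f x = z := by
  classical
  induction s using Finset.cons_induction with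
  | empty => exact ⟨0, by simp⟩
  | cons a s ha ih =>
    obtain ⟨z, hz⟩ := ih (fun x hx => h x (Finset.mem_cons_of_mem hx))
    rcases h a (Finset.mem_cons_self a s) with h0 | h1
    · exact ⟨z, by rw [Finset.sum_cons, h0, hz]; ring⟩
    · exact ⟨z + 1, by rw [Finset.sum_cons, h1, hz]; push_cast; ring⟩

lemma not_int_frac {x : ℝ} (h0 : 0 < x) (h1 : x < 1) (z : ℤ) : (z : ℝ) ≠ x := by
  intro h
  subst h
  have : 0 < z := by exact_mod_cast h0
  have : z < 1 := by exact_mod_cast h1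
  omega

lemma exists_second_frac {κ : Type*} [Fintype κ] [DecidableEq κ] (f : κ → ℝ) (z : ℤ)
    (hz : ∑ x, f x = z) (k : κ) (hk : 0 < f k ∧ f k < 1)
    (hother : ∀ x, ¬(0 < f x ∧ f x < 1) → f x = 0 ∨ f x = 1) :
    ∃ k', k' ≠ k ∧ 0 < f k' ∧ f k' < 1 := by
  by_contra hcon
  push_neg at hcon
  have hrest : ∀ x ∈ Finset.univ.erase k, f x = 0 ∨ f x = 1 := by
    intro x hx
    refine hother x fun hfx => ?_
    exact absurd hfx.2 (not_lt.mpr (hcon x (Finset.mem_erase.mp hx).1 hfx.1))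
  obtain ⟨z', hz'⟩ := sum_zero_one_int _ _ hrest
  have hsplit : f k + ∑ x ∈ Finset.univ.erase k, f x = z := by
    rw [← hz, Finset.add_sum_erase _ _ (Finset.mem_univ k)]
  have : ((z - z' : ℤ) : ℝ) = f k := by push_cast; rw [← hz']; linarith
  exact not_int_frac hk.1 hk.2 _ this

/-- Every extreme point of the polytope `R` of random allocations
(with demand equalities and minimum/capacity constraints) has all entries in
`{0,1}`. -/
theorem extremePoints_R_integral
    {N O : Type*} [Fintype N] [Fintype O] [Nonempty N] [Nonempty O]
    (d : ℕ) (hd : 1 ≤ d) (m c : O → ℤ)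
    (hm : ∀ j, 0 ≤ m j) (hc : ∀ j, 1 ≤ c j)
    (R : Set (N → O → ℝ))
    (hR : R = {μ : N → O → ℝ | (∀ i j, 0 ≤ μ i j ∧ μ i j ≤ 1) ∧
      (∀ i, ∑ j, μ i j = d) ∧
      (∀ j, (m j : ℝ) ≤ ∑ i, μ i j ∧ ∑ i, μ i j ≤ c j)}) :
    ∀ μ ∈ R.extremePoints ℝ, ∀ i j, μ i j = 0 ∨ μ i j = 1 := by
  classical
  intro μ hμ
  obtain ⟨hμR, hext⟩ := mem_extremePoints.mp hμ
  have hμR' := hμR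
  rw [hR] at hμR'
  obtain ⟨hbd, hrow, hcolsum⟩ := hμR'
  by_contra hcon
  push_neg at hcon
  obtain ⟨i0, j0, h00, h01⟩ := hcon
  set F : Finset (N × O) :=
    Finset.univ.filter (fun p => 0 < μ p.1 p.2 ∧ μ p.1 p.2 < 1) with hFdef
  have hmemF : ∀ p : N × O, p ∈ F ↔ (0 < μ p.1 p.2 ∧ μ p.1 p.2 < 1) := by
    intro p; simp [hFdef]
  have hnotF : ∀ p : N × O, p ∉ F → μ p.1 p.2 = 0 ∨ μ p.1 p.2 = 1 := by
    intro p hp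
    rw [hmemF] at hp; push_neg at hp
    rcases eq_or_lt_of_le (hbd p.1 p.2).1 with h | h
    · exact Or.inl h.symm
    · exact Or.inr (le_antisymm (hbd p.1 p.2).2 (hp h))
  have h0F : (i0, j0) ∈ F := by
    rw [hmemF]
    exact ⟨lt_of_le_of_ne (hbd i0 j0).1 (Ne.symm h00), lt_of_le_of_ne (hbd i0 j0).2 h01⟩
  set Rw : Finset N := F.image Prod.fst with hRwdef
  set Cols : Finset O := F.image Prod.snd with hColsdef
  set T : Finset O :=
    Cols.filter (fun j => (∑ i, μ i j) = m j ∨ (∑ i, μ i j) = c j) with hTdef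
  -- every touched row has at least two fractional cells
  have hrow2 : ∀ i ∈ Rw, 2 ≤ (F.filter (fun p => p.1 = i)).card := by
    intro i hi
    obtain ⟨p, hpF, hpi⟩ := Finset.mem_image.mp hi
    have hfrac := (hmemF p).mp hpF
    rw [hpi] at hfrac
    obtain ⟨j', hj', hfrac'⟩ := exists_second_frac (μ i) d (by exact_mod_cast hrow i) p.2
      hfrac
      (fun x hx => hnotF (i, x) (fun hmem => hx ((hmemF (i, x)).mp hmem)))
    refine Finset.one_lt_card.mpr ⟨(i, j'), ?_, (i, p.2), ?_, ?_⟩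
    · exact Finset.mem_filter.mpr ⟨(hmemF (i, j')).mpr hfrac', rfl⟩
    · exact Finset.mem_filter.mpr ⟨(hmemF (i, p.2)).mpr hfrac, rfl⟩
    · simp [Prod.ext_iff]; intro h; exact absurd h hj'
  -- every touched tight column has at least two fractional cells
  have hcol2 : ∀ j ∈ T, 2 ≤ (F.filter (fun p => p.2 = j)).card := by
    intro j hj
    obtain ⟨hjC, htight⟩ := Finset.mem_filter.mp hj
    obtain ⟨p, hpF, hpj⟩ := Finset.mem_image.mp hjC
    have hfrac := (hmemF p).mp hpF
    rw [hpj] at hfrac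
    have hz : ∃ z : ℤ, ∑ i, μ i j = (z : ℝ) := by
      rcases htight with h | h
      · exact ⟨m j, h⟩
      · exact ⟨c j, h⟩
    obtain ⟨z, hz⟩ := hz
    obtain ⟨i', hi', hfrac'⟩ := exists_second_frac (fun i => μ i j) z hz p.1
      hfrac
      (fun x hx => hnotF (x, j) (fun hmem => hx ((hmemF (x, j)).mp hmem)))
    refine Finset.one_lt_card.mpr ⟨(i', j), ?_, (p.1, j), ?_, ?_⟩
    · exact Finset.mem_filter.mpr ⟨(hmemF (i', j)).mpr hfrac', rfl⟩
    · exact Finset.mem_filter.mpr ⟨(hmemF (p.1, j)).mpr hfrac, rfl⟩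
    · simp [Prod.ext_iff]; intro h; exact absurd h hi'
  -- fiberwise counting
  have hcards1 : F.card = ∑ i ∈ Rw, (F.filter (fun p => p.1 = i)).card :=
    Finset.card_eq_sum_card_fiberwise (fun p hp => Finset.mem_image_of_mem Prod.fst hp)
  have hcards2 : F.card = ∑ j ∈ Cols, (F.filter (fun p => p.2 = j)).card :=
    Finset.card_eq_sum_card_fiberwise (fun p hp => Finset.mem_image_of_mem Prod.snd hp)
  have hge1 : 2 * Rw.card ≤ F.card := by
    rw [hcards1]
    calc 2 * Rw.card = ∑ _i ∈ Rw, 2 := by rw [Finset.sum_const]; ring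
    _ ≤ _ := Finset.sum_le_sum hrow2
  have hfib1 : ∀ j ∈ Cols, 1 ≤ (F.filter (fun p => p.2 = j)).card := by
    intro j hj
    obtain ⟨p, hp, hpj⟩ := Finset.mem_image.mp hj
    exact Finset.card_pos.mpr ⟨p, Finset.mem_filter.mpr ⟨hp, hpj⟩⟩
  have hi0Rw : i0 ∈ Rw := Finset.mem_image_of_mem Prod.fst h0F
  -- choose the row constraint set E, with the key cardinality bound and implication
  obtain ⟨E, hcard, himp⟩ : ∃ E : Finset N, E.card + T.card < F.card ∧
      ∀ δ : N → O → ℝ, (∀ p : N × O, p ∉ F → δ p.1 p.2 = 0) →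
        (∀ i ∈ E, ∑ j, δ i j = 0) → (∀ j ∈ T, ∑ i, δ i j = 0) →
        ∀ i, ∑ j, δ i j = 0 := by
    have hout : ∀ (δ : N → O → ℝ), (∀ p : N × O, p ∉ F → δ p.1 p.2 = 0) →
        ∀ i', i' ∉ Rw → ∑ j, δ i' j = 0 := by
      intro δ hsupp i' hi'
      exact Finset.sum_eq_zero fun j _ =>
        hsupp (i', j) (fun hmem => hi' (Finset.mem_image_of_mem Prod.fst hmem))
    by_cases hall : ∀ j ∈ Cols, ((∑ i, μ i j) = m j ∨ (∑ i, μ i j) = c j)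
    · have hTC : T = Cols := Finset.filter_true_of_mem hall
      refine ⟨Rw.erase i0, ?_, ?_⟩
      · have h2 : 2 * T.card ≤ F.card := by
          rw [hcards2, hTC]
          calc 2 * Cols.card = ∑ _j ∈ Cols, 2 := by rw [Finset.sum_const]; ring
          _ ≤ _ := Finset.sum_le_sum (fun j hj => hcol2 j (hTC ▸ hj))
        have h3 : (Rw.erase i0).card = Rw.card - 1 := Finset.card_erase_of_mem hi0Rw
        have h4 : 1 ≤ Rw.card := Finset.card_pos.mpr ⟨i0, hi0Rw⟩
        omega
      · intro δ hsupp hE hT' i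
        by_cases hiRw : i ∈ Rw
        swap
        · exact hout δ hsupp i hiRw
        by_cases hii0 : i = i0
        swap
        · exact hE i (Finset.mem_erase.mpr ⟨hii0, hiRw⟩)
        subst hii0
        have hcolz : ∀ j, ∑ i', δ i' j = 0 := by
          intro j
          by_cases hj : j ∈ Cols
          · exact hT' j (hTC ▸ hj)
          · exact Finset.sum_eq_zero fun i' _ =>
              hsupp (i', j) (fun hmem => hj (Finset.mem_image_of_mem Prod.snd hmem))
        have htot : ∑ i', ∑ j, δ i' j = 0 := by
          rw [Finset.sum_comm]
          exact Finset.sum_eq_zero fun j _ => hcolz j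
        have hothers : ∑ i' ∈ Finset.univ.erase i, ∑ j, δ i' j = 0 := by
          refine Finset.sum_eq_zero fun i' hi' => ?_
          have hne := (Finset.mem_erase.mp hi').1
          by_cases h : i' ∈ Rw
          · exact hE i' (Finset.mem_erase.mpr ⟨hne, h⟩)
          · exact hout δ hsupp i' h
        have hsplit := Finset.add_sum_erase Finset.univ (fun i' => ∑ j, δ i' j)
          (Finset.mem_univ i)
        rw [htot] at hsplit
        rw [hothers] at hsplit
        linarith
    · push_neg at hall
      obtain ⟨jf, hjfC, hjfT⟩ := hall
      have hjfnT : jf ∉ T := by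
        intro h
        exact absurd (Finset.mem_filter.mp h).2 (by push_neg; exact hjfT)
      refine ⟨Rw, ?_, ?_⟩
      · have hsub : insert jf T ⊆ Cols := by
          intro x hx
          rcases Finset.mem_insert.mp hx with h | h
          · exact h ▸ hjfC
          · exact Finset.filter_subset _ _ h
        have h5 : ∑ j ∈ insert jf T, (F.filter (fun p => p.2 = j)).card ≤ F.card := by
          rw [hcards2]
          exact Finset.sum_le_sum_of_subset hsub
        have h6 : 2 * T.card + 1 ≤ ∑ j ∈ insert jf T, (F.filter (fun p => p.2 = j)).card := by
          rw [Finset.sum_insert hjfnT]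
          have h7 : 2 * T.card ≤ ∑ j ∈ T, (F.filter (fun p => p.2 = j)).card := by
            calc 2 * T.card = ∑ _j ∈ T, 2 := by rw [Finset.sum_const]; ring
            _ ≤ _ := Finset.sum_le_sum hcol2
          have h8 := hfib1 jf hjfC
          omega
        omega
      · intro δ hsupp hE hT' i
        by_cases hiRw : i ∈ Rw
        · exact hE i hiRw
        · exact hout δ hsupp i hiRw
  -- the perturbation direction from the kernel
  let A : Matrix ((↥E) ⊕ (↥T)) (↥F) ℝ := fun s p =>
    Sum.casesOn s (fun i => if (p : N × O).1 = ↑i then 1 else 0)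
      (fun j => if (p : N × O).2 = ↑j then 1 else 0)
  have hcardlt : Fintype.card ((↥E) ⊕ (↥T)) < Fintype.card ↥F := by
    simpa [Fintype.card_sum] using hcard
  obtain ⟨v, hv0, hvA⟩ := exists_ne_zero_mulVec_eq_zero hcardlt A
  set δ : N → O → ℝ := fun i j => if h : (i, j) ∈ F then v ⟨(i, j), h⟩ else 0 with hδdef
  have hδval : ∀ p : ↥F, δ (p : N × O).1 (p : N × O).2 = v p := by
    intro p
    have hp : ((p : N × O).1, (p : N × O).2) ∈ F := by
      rw [Prod.mk.eta]; exact p.2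
    simp only [hδdef]
    rw [dif_pos hp]
  have hsupp : ∀ p : N × O, p ∉ F → δ p.1 p.2 = 0 := by
    intro p hp
    simp only [hδdef]
    rw [dif_neg (by rwa [Prod.mk.eta])]
  -- row sums of δ as mulVec components
  have hrowδ : ∀ i : N, ∑ j, δ i j = ∑ p : ↥F, (if (p : N × O).1 = i then v p else 0) := by
    intro i
    have e1 : ∑ p : ↥F, (if (p : N × O).1 = i then v p else 0)
        = ∑ q ∈ F, (if q.1 = i then δ q.1 q.2 else 0) := by
      rw [← Finset.sum_attach F (fun q => if q.1 = i then δ q.1 q.2 else 0)]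
      refine Finset.sum_congr rfl fun p _ => ?_
      rw [hδval p]
    have e2 : ∑ q ∈ F, (if q.1 = i then δ q.1 q.2 else 0)
        = ∑ q : N × O, (if q.1 = i then δ q.1 q.2 else 0) := by
      refine Finset.sum_subset (Finset.subset_univ F) fun q _ hq => ?_
      rw [hsupp q hq]; simp
    have e3 : ∑ q : N × O, (if q.1 = i then δ q.1 q.2 else 0) = ∑ j, δ i j := by
      rw [Fintype.sum_prod_type]
      rw [Finset.sum_eq_single i (fun a _ ha => by simp [ha]) (by simp)]
      simp
    rw [e1, e2, e3]
  have hcolδ : ∀ j : O, ∑ i, δ i j = ∑ p : ↥F, (if (p : N × O).2 = j then v p else 0) := by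
    intro j
    have e1 : ∑ p : ↥F, (if (p : N × O).2 = j then v p else 0)
        = ∑ q ∈ F, (if q.2 = j then δ q.1 q.2 else 0) := by
      rw [← Finset.sum_attach F (fun q => if q.2 = j then δ q.1 q.2 else 0)]
      refine Finset.sum_congr rfl fun p _ => ?_
      rw [hδval p]
    have e2 : ∑ q ∈ F, (if q.2 = j then δ q.1 q.2 else 0)
        = ∑ q : N × O, (if q.2 = j then δ q.1 q.2 else 0) := by
      refine Finset.sum_subset (Finset.subset_univ F) fun q _ hq => ?_
      rw [hsupp q hq]; simp
    have e3 : ∑ q : N × O, (if q.2 = j then δ q.1 q.2 else 0) = ∑ i, δ i j := by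
      rw [Fintype.sum_prod_type_right]
      rw [Finset.sum_eq_single j (fun a _ ha => by simp [ha]) (by simp)]
      simp
    rw [e1, e2, e3]
  have hrowE : ∀ i ∈ E, ∑ j, δ i j = 0 := by
    intro i hi
    have h := congrFun hvA (Sum.inl ⟨i, hi⟩)
    have h2 : A.mulVec v (Sum.inl ⟨i, hi⟩)
        = ∑ p : ↥F, (if (p : N × O).1 = i then v p else 0) := by
      simp [Matrix.mulVec, dotProduct, A, ite_mul, one_mul, zero_mul]
    rw [hrowδ i, ← h2, h]
    rfl
  have hcolTz : ∀ j ∈ T, ∑ i, δ i j = 0 := by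
    intro j hj
    have h := congrFun hvA (Sum.inr ⟨j, hj⟩)
    have h2 : A.mulVec v (Sum.inr ⟨j, hj⟩)
        = ∑ p : ↥F, (if (p : N × O).2 = j then v p else 0) := by
      simp [Matrix.mulVec, dotProduct, A, ite_mul, one_mul, zero_mul]
    rw [hcolδ j, ← h2, h]
    rfl
  have hrowzero : ∀ i, ∑ j, δ i j = 0 := himp δ hsupp hrowE hcolTz
  -- set up the size of the perturbation
  set Mb : ℝ := (∑ p : N × O, |δ p.1 p.2|) + 1 with hMbdef
  have hsumabs : 0 ≤ ∑ p : N × O, |δ p.1 p.2| :=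
    Finset.sum_nonneg fun p _ => abs_nonneg _
  have hMb1 : 1 ≤ Mb := by rw [hMbdef]; linarith
  have hMb0 : 0 < Mb := by linarith
  have hentry : ∀ i j, |δ i j| ≤ Mb := by
    intro i j
    have := Finset.single_le_sum (f := fun p : N × O => |δ p.1 p.2|)
      (fun p _ => abs_nonneg _) (Finset.mem_univ (i, j))
    rw [hMbdef]; simp at this ⊢; linarith
  have hcolabs : ∀ j, |∑ i, δ i j| ≤ Mb := by
    intro j
    have h1 : |∑ i, δ i j| ≤ ∑ i, |δ i j| := Finset.abs_sum_le_sum_abs _ _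
    have h2 : ∑ p : N × O, |δ p.1 p.2| = ∑ j', ∑ i, |δ i j'| := by
      rw [Fintype.sum_prod_type_right]
    have h3 : ∑ i, |δ i j| ≤ ∑ j', ∑ i, |δ i j'| :=
      Finset.single_le_sum (f := fun j' => ∑ i, |δ i j'|)
        (fun j' _ => Finset.sum_nonneg fun i _ => abs_nonneg _) (Finset.mem_univ j)
    rw [hMbdef]; linarith
  -- slack quantities
  set e : N × O → ℝ :=
    fun p => if p ∈ F then min (μ p.1 p.2) (1 - μ p.1 p.2) else 1 with hedef
  set g : O → ℝ :=
    fun j => if j ∈ Cols \ T then min ((∑ i, μ i j) - m j) (c j - ∑ i, μ i j) else 1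
      with hgdef
  have hepos : ∀ p, 0 < e p := by
    intro p
    rw [hedef]
    by_cases hp : p ∈ F
    · have := (hmemF p).mp hp
      simp only [if_pos hp]
      exact lt_min this.1 (by linarith [this.2])
    · simp [hp]
  have hgpos : ∀ j, 0 < g j := by
    intro j
    rw [hgdef]
    by_cases hj : j ∈ Cols \ T
    · obtain ⟨hjC, hjT⟩ := Finset.mem_sdiff.mp hj
      have hnt : ¬((∑ i, μ i j) = m j ∨ (∑ i, μ i j) = c j) := fun h =>
        hjT (Finset.mem_filter.mpr ⟨hjC, h⟩)
      push_neg at hnt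
      have h1 := (hcolsum j).1
      have h2 := (hcolsum j).2
      simp only [if_pos hj]
      exact lt_min (by cases lt_or_eq_of_le h1 with
        | inl h => linarith
        | inr h => exact absurd h.symm hnt.1)
        (by cases lt_or_eq_of_le h2 with
        | inl h => linarith
        | inr h => exact absurd h hnt.2)
    · simp [hj]
  set s : ℝ := min ((Finset.univ : Finset (N × O)).inf' Finset.univ_nonempty e)
    ((Finset.univ : Finset O).inf' Finset.univ_nonempty g) with hsdef
  have hspos : 0 < s := by
    rw [hsdef]
    refine lt_min ?_ ?_
    · exact (Finset.lt_inf'_iff _).mpr fun p _ => hepos p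
    · exact (Finset.lt_inf'_iff _).mpr fun j _ => hgpos j
  have hse : ∀ p, s ≤ e p := fun p =>
    le_trans (min_le_left _ _) (Finset.inf'_le _ (Finset.mem_univ p))
  have hsg : ∀ j, s ≤ g j := fun j =>
    le_trans (min_le_right _ _) (Finset.inf'_le _ (Finset.mem_univ j))
  set ε : ℝ := s / (2 * Mb) with hεdef
  have hεpos : 0 < ε := div_pos hspos (by linarith)
  have hεM : ε * Mb = s / 2 := by
    rw [hεdef]
    field_simp
  have hbound : ∀ (t x : ℝ), |t| ≤ ε → |x| ≤ Mb → |t * x| ≤ s / 2 := by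
    intro t x ht hx
    rw [abs_mul]
    calc |t| * |x| ≤ ε * Mb :=
      mul_le_mul ht hx (abs_nonneg _) (le_of_lt hεpos)
    _ = s / 2 := hεM
  -- membership of perturbations
  have hmemb : ∀ t : ℝ, |t| ≤ ε → (fun i j => μ i j + t * δ i j) ∈ R := by
    intro t ht
    rw [hR]
    refine ⟨?_, ?_, ?_⟩
    · intro i j
      by_cases hij : (i, j) ∈ F
      · have hfr := (hmemF (i, j)).mp hij
        have h1 : |t * δ i j| ≤ s / 2 := hbound t (δ i j) ht (hentry i j)
        have h2 : s ≤ min (μ i j) (1 - μ i j) := by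
          have := hse (i, j)
          simp only [hedef, if_pos hij] at this
          exact this
        have h3 := abs_le.mp h1
        have h4 := le_min_iff.mp h2
        constructor
        · simp only []; linarith [h4.1, h3.1]
        · simp only []; linarith [h4.2, h3.2]
      · have hz : δ i j = 0 := hsupp (i, j) hij
        simp only [hz, mul_zero, add_zero]
        exact hbd i j
    · intro i
      rw [Finset.sum_add_distrib, ← Finset.mul_sum, hrowzero i, hrow i]
      ring
    · intro j
      rw [Finset.sum_add_distrib, ← Finset.mul_sum]
      by_cases hjC : j ∈ Cols
      · by_cases hjT : j ∈ T
        · rw [hcolTz j hjT]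
          simpa using hcolsum j
        · have h2 : s ≤ min ((∑ i, μ i j) - m j) (c j - ∑ i, μ i j) := by
            have := hsg j
            simp only [hgdef, if_pos (Finset.mem_sdiff.mpr ⟨hjC, hjT⟩)] at this
            exact this
          have h1 : |t * ∑ i, δ i j| ≤ s / 2 := hbound t _ ht (hcolabs j)
          have h3 := abs_le.mp h1
          have h4 := le_min_iff.mp h2
          constructor
          · linarith [h4.1, h3.1]
          · linarith [h4.2, h3.2]
      · have hz : ∑ i, δ i j = 0 := Finset.sum_eq_zero fun i _ =>
          hsupp (i, j) (fun hmem => hjC (Finset.mem_image_of_mem Prod.snd hmem))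
        rw [hz]
        simpa using hcolsum j
  -- final contradiction via extremality
  obtain ⟨p0, hp0⟩ := Function.ne_iff.mp hv0
  have hδne : δ (p0 : N × O).1 (p0 : N × O).2 ≠ 0 := by
    rw [hδval p0]; exact hp0
  set ν₁ : N → O → ℝ := fun i j => μ i j + ε * δ i j with hν₁
  set ν₂ : N → O → ℝ := fun i j => μ i j + (-ε) * δ i j with hν₂
  have hmem1 : ν₁ ∈ R := hmemb ε (le_of_eq (abs_of_pos hεpos))
  have hmem2 : ν₂ ∈ R := hmemb (-ε) (le_of_eq (by rw [abs_neg, abs_of_pos hεpos]))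
  have hmid : μ ∈ openSegment ℝ ν₁ ν₂ := by
    refine ⟨1/2, 1/2, by norm_num, by norm_num, by norm_num, ?_⟩
    funext i j
    simp only [hν₁, hν₂, Pi.add_apply, Pi.smul_apply, smul_eq_mul]
    ring
  have hfix := hext ν₁ hmem1 ν₂ hmem2 hmid
  have hcontr := congrFun (congrFun hfix.1 (p0 : N × O).1) (p0 : N × O).2
  simp only [hν₁] at hcontr
  have : ε * δ (p0 : N × O).1 (p0 : N × O).2 = 0 := by linarith
  rcases mul_eq_zero.mp this with h | h
  · exact absurd h (ne_of_gt hεpos)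
  · exact hδne h
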